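/- Let nbb(G) be the collection of increasing tuples S = (i_1 < ⋯ < i_p) such that i_j = min ℓc({i_j,…,i_p}) for all j. Then the monomials {a_S : S ∈ nbb(G)} are linearly independent in the quadratic closure A_2 = E/I_2. -/

import Mathlib

open ExteriorAlgebra

variable (K : Type*) [Field K] {n : ℕ}

/-- The generator `e i` of the exterior algebra `E = Λ(e_1,…,e_n)`. -/
noncomputable def gen (i : Fin n) : ExteriorAlgebra K (Fin n → K) :=
  ι K (Pi.single i 1)

/-- The monomial `e_S = e_{i_1} ∧ ⋯ ∧ e_{i_p}` for a tuple `S` given as a list. -/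
noncomputable def eS (l : List (Fin n)) : ExteriorAlgebra K (Fin n → K) :=
  (l.map (gen K)).prod

/-- `D` is the boundary map `∂`: it is linear and satisfies
`∂(e_{i_1} ∧ ⋯ ∧ e_{i_p}) = ∑ k (-1)^{k-1} e_{i_1} ∧ ⋯ ∧ ê_{i_k} ∧ ⋯ ∧ e_{i_p}`
(indexing the sum from `0`, the sign of the `k`-th term is `(-1)^k`). -/
def IsBoundary (D : ExteriorAlgebra K (Fin n → K) →ₗ[K] ExteriorAlgebra K (Fin n → K)) :
    Prop :=
  ∀ l : List (Fin n),
    D (eS K l) = ∑ k : Fin l.length, ((-1 : K) ^ (k : ℕ)) • eS K (l.eraseIdx k)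

/-- A circuit of a matroid: a minimal dependent set. -/
def IsCircuit {α : Type*} (M : Matroid α) (C : Set α) : Prop :=
  M.Dep C ∧ ∀ C' ⊂ C, ¬ M.Dep C'

/-- A simple matroid: every subset with at most two elements is independent
(no loops and no parallel points). -/
def MatroidSimple {α : Type*} (M : Matroid α) : Prop :=
  ∀ i j : α, M.Indep {i, j}

/-- The Orlik–Solomon ideal `I` of a matroid `G`: the ideal of the exterior algebra
generated by the boundaries `∂ e_S` of dependent tuples `S`. -/
noncomputable def OSIdeal (M : Matroid (Fin n))
    (D : ExteriorAlgebra K (Fin n → K) →ₗ[K] ExteriorAlgebra K (Fin n → K)) :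
    TwoSidedIdeal (ExteriorAlgebra K (Fin n → K)) :=
  TwoSidedIdeal.span
    {x | ∃ l : List (Fin n), l.Nodup ∧ M.Dep {i | i ∈ l} ∧ x = D (eS K l)}

/-- The defining relation of the Orlik–Solomon algebra `A(G) = E/I`:
each generator `∂ e_S` (`S` dependent) is set to zero. -/
def OSRel (M : Matroid (Fin n))
    (D : ExteriorAlgebra K (Fin n → K) →ₗ[K] ExteriorAlgebra K (Fin n → K)) :
    ExteriorAlgebra K (Fin n → K) → ExteriorAlgebra K (Fin n → K) → Prop :=
  fun x y => y = 0 ∧ ∃ l : List (Fin n), l.Nodup ∧ M.Dep {i | i ∈ l} ∧ x = D (eS K l)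

/-- The Orlik–Solomon algebra `A(G) = E/I`. -/
noncomputable abbrev OSAlgebra (M : Matroid (Fin n))
    (D : ExteriorAlgebra K (Fin n → K) →ₗ[K] ExteriorAlgebra K (Fin n → K)) :=
  RingQuot (OSRel K M D)

/-- The image `a_i` of the generator `e_i` in the Orlik–Solomon algebra. -/
noncomputable def aGen (M : Matroid (Fin n))
    (D : ExteriorAlgebra K (Fin n → K) →ₗ[K] ExteriorAlgebra K (Fin n → K))
    (i : Fin n) : OSAlgebra K M D :=
  RingQuot.mkAlgHom K (OSRel K M D) (gen K i)

/-- A set is line-closed if it contains the line (rank-2 flat) spanned by any two of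
its points. -/
def LineClosedSet {α : Type*} (M : Matroid α) (S : Set α) : Prop :=
  ∀ i ∈ S, ∀ j ∈ S, M.closure {i, j} ⊆ S

/-- The line-closure `ℓc(S)`: the smallest line-closed set containing `S`. -/
def lineClosure {α : Type*} (M : Matroid α) (S : Set α) : Set α :=
  ⋂₀ {T | S ⊆ T ∧ LineClosedSet M T}

/-- The `k`-adic Orlik–Solomon ideal `I_k`. -/
noncomputable def kAdicIdeal (M : Matroid (Fin n))
    (D : ExteriorAlgebra K (Fin n → K) →ₗ[K] ExteriorAlgebra K (Fin n → K)) (k : ℕ) :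
    TwoSidedIdeal (ExteriorAlgebra K (Fin n → K)) :=
  TwoSidedIdeal.span
    {x | x ∈ OSIdeal K M D ∧ ∃ j ≤ k, x ∈ ⋀[K]^j (Fin n → K)}

/-- An increasing tuple `S = (i_1 < ⋯ < i_p)` is in `nbb(G)` iff for each `j`,
`i_j` is the least element of the line-closure `ℓc({i_j,…,i_p})`. -/
def IsNbb (M : Matroid (Fin n)) (l : List (Fin n)) : Prop :=
  l.Pairwise (· < ·) ∧
    ∀ j : Fin l.length, IsLeast (lineClosure M {i | i ∈ l.drop (j : ℕ)}) (l.get j)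

-- ==== part 1 ====
section Aux
variable {α : Type*} {M : Matroid α}

lemma subset_lineClosure (S : Set α) : S ⊆ lineClosure M S := by
  intro x hx
  exact fun T hT => hT.1 hx

lemma lineClosedSet_lineClosure (S : Set α) : LineClosedSet M (lineClosure M S) := by
  intro i hi j hj x hx
  intro T hT
  exact hT.2 i (hi T hT) j (hj T hT) hx

lemma lineClosure_mono {S S' : Set α} (h : S ⊆ S') : lineClosure M S ⊆ lineClosure M S' := by
  intro x hx T hT
  exact hx T ⟨h.trans hT.1, hT.2⟩

lemma mem_closure_of_dep (hs : MatroidSimple M) {x y z : α}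
    (hdep : M.Dep (insert z {x, y})) : z ∈ M.closure {x, y} :=
  ((hs x y).insert_dep_iff.mp hdep).1

lemma three_le_length_of_dep (hs : MatroidSimple M) {l : List α} (hnd : l.Nodup)
    (hdep : M.Dep {i | i ∈ l}) : 3 ≤ l.length := by
  match l with
  | [] =>
    exfalso
    refine hdep.not_indep ?_
    have : {i | i ∈ ([] : List α)} = (∅ : Set α) := by ext x; simp
    rw [this]; exact M.empty_indep
  | [a] =>
    exfalso
    refine hdep.not_indep ?_
    have : {i | i ∈ ([a] : List α)} = ({a, a} : Set α) := by ext x; simp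
    rw [this]; exact hs a a
  | [a, b] =>
    exfalso
    refine hdep.not_indep ?_
    have : {i | i ∈ ([a, b] : List α)} = ({a, b} : Set α) := by ext x; simp
    rw [this]; exact hs a b
  | _ :: _ :: _ :: _ => simp [List.length_cons]

end Aux

-- ==== part 2 : monomial spanning ====
section Mono

variable {K}

/-- monomials: products of `ι`s of arbitrary vectors -/
def IsMono (x : ExteriorAlgebra K (Fin n → K)) : Prop :=
  ∃ l : List (Fin n → K), x = (l.map (ι K)).prod

lemma isMono_mul {x y : ExteriorAlgebra K (Fin n → K)} (hx : IsMono x) (hy : IsMono y) :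
    IsMono (x * y) := by
  obtain ⟨lx, rfl⟩ := hx
  obtain ⟨ly, rfl⟩ := hy
  exact ⟨lx ++ ly, by rw [List.map_append, List.prod_append]⟩

lemma mem_monomialSpan (x : ExteriorAlgebra K (Fin n → K)) :
    x ∈ Submodule.span K {y | IsMono y} := by
  induction x using CliffordAlgebra.induction with
  | algebraMap r =>
    rw [Algebra.algebraMap_eq_smul_one]
    refine Submodule.smul_mem _ _ (Submodule.subset_span ⟨[], by simp⟩)
  | ι m => exact Submodule.subset_span ⟨[m], by simp⟩
  | mul a b ha hb =>
    have key : ∀ u, IsMono u → ∀ b ∈ Submodule.span K {y | IsMono (y : ExteriorAlgebra K (Fin n → K))},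
        u * b ∈ Submodule.span K {y | IsMono y} := by
      intro u hu b hb
      refine Submodule.span_induction (fun z hz => Submodule.subset_span (isMono_mul hu hz))
        (by rw [mul_zero]; exact Submodule.zero_mem _)
        (fun z w _ _ hz hw => by rw [mul_add]; exact Submodule.add_mem _ hz hw)
        (fun c z _ hz => by rw [mul_smul_comm]; exact Submodule.smul_mem _ _ hz) hb
    refine Submodule.span_induction (fun z hz => key z hz b hb)
      (by rw [zero_mul]; exact Submodule.zero_mem _)
      (fun z w _ _ hz hw => by rw [add_mul]; exact Submodule.add_mem _ hz hw)
      (fun c z _ hz => by rw [smul_mul_assoc]; exact Submodule.smul_mem _ _ hz) ha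
  | add a b ha hb => exact Submodule.add_mem _ ha hb

end Mono

section Phi
open scoped Classical

variable (p : ℕ) (X : Fin p → Set (Fin n))

noncomputable def theta (A : Set (Fin n)) : (Fin n → K) →ₗ[K] K :=
  ∑ i : Fin n, if i ∈ A then (LinearMap.proj i : (Fin n → K) →ₗ[K] K) else 0

lemma theta_single (A : Set (Fin n)) (j : Fin n) :
    theta K A (Pi.single j 1) = if j ∈ A then 1 else 0 := by
  rw [theta, LinearMap.sum_apply]
  rw [Finset.sum_eq_single j]
  · by_cases h : j ∈ A <;> simp [h]
  · intro i _ hij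
    by_cases h : i ∈ A <;> simp [h, Pi.single_apply, hij.symm]
  · simp

noncomputable def rowTheta : (Fin n → K) →ₗ[K] (Fin p → K) :=
  LinearMap.pi (fun c => theta K (X c))

lemma rowTheta_single (x : Fin n) :
    rowTheta K p X (Pi.single x 1) = fun c => if x ∈ X c then (1 : K) else 0 := by
  funext c
  rw [rowTheta, LinearMap.pi_apply, theta_single]

noncomputable def phiAlt : (Fin n → K) [⋀^Fin p]→ₗ[K] K :=
  (Matrix.detRowAlternating).compLinearMap (rowTheta K p X)

lemma phiAlt_apply (v : Fin p → (Fin n → K)) :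
    phiAlt K p X v = Matrix.detRowAlternating (fun a => rowTheta K p X (v a)) := by
  rw [phiAlt, AlternatingMap.compLinearMap_apply]

noncomputable def phiFam : ∀ i : ℕ, (Fin n → K) [⋀^Fin i]→ₗ[K] K :=
  fun i => if h : i = p then (phiAlt K p X).domDomCongr (finCongr h.symm) else 0

noncomputable def phiF : ExteriorAlgebra K (Fin n → K) →ₗ[K] K :=
  liftAlternating (phiFam K p X)

lemma prod_map_eq_ιMulti (l : List (Fin n → K)) :
    (l.map (ι K)).prod = ιMulti K l.length l.get := by
  rw [ιMulti_apply]
  congr 1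
  rw [show (fun i => ι K (l.get i)) = (ι K) ∘ l.get from rfl, ← List.map_ofFn, List.ofFn_get]

lemma phiF_list_ne {l : List (Fin n → K)} (h : l.length ≠ p) :
    phiF K p X ((l.map (ι K)).prod) = 0 := by
  rw [prod_map_eq_ιMulti, phiF, liftAlternating_apply_ιMulti, phiFam, dif_neg h]
  rfl

lemma phiF_list_eq {l : List (Fin n → K)} (h : l.length = p) :
    phiF K p X ((l.map (ι K)).prod)
      = phiAlt K p X (fun a => l.get (Fin.cast h.symm a)) := by
  rw [prod_map_eq_ιMulti, phiF, liftAlternating_apply_ιMulti, phiFam, dif_pos h,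
    AlternatingMap.domDomCongr_apply]
  rfl

lemma rows_collapse {M : Matroid (Fin n)} (hmono : Monotone X)
    (hlc : ∀ c, LineClosedSet M (X c)) {i j k : Fin n}
    (hci : i ∈ M.closure {j, k}) (hcj : j ∈ M.closure {i, k}) (hck : k ∈ M.closure {i, j}) :
    (∀ c, i ∈ X c ↔ j ∈ X c) ∨ (∀ c, j ∈ X c ↔ k ∈ X c) ∨ (∀ c, i ∈ X c ↔ k ∈ X c) := by
  have tot : ∀ x y : Fin n, (∀ c, x ∈ X c → y ∈ X c) ∨ (∀ c, y ∈ X c → x ∈ X c) := by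
    intro x y
    by_cases h : ∀ c, x ∈ X c → y ∈ X c
    · exact Or.inl h
    · push_neg at h
      obtain ⟨c, hxc, hyc⟩ := h
      refine Or.inr fun c' hy' => ?_
      rcases le_total c c' with hle | hle
      · exact hmono hle hxc
      · exact absurd (hmono hle hy') hyc
  have final : ∀ x y z : Fin n, (∃ c, y ∈ X c ∧ x ∉ X c) → (∀ c, y ∈ X c → z ∈ X c) →
      (∀ c, y ∈ X c → z ∈ X c → x ∈ X c) → False := by
    rintro x y z ⟨c, hy, hx⟩ h3 hcl
    exact hx (hcl c hy (h3 c hy))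
  have wit : ∀ x y : Fin n, (∀ c, x ∈ X c → y ∈ X c) → ¬(∀ c, x ∈ X c ↔ y ∈ X c) →
      ∃ c, y ∈ X c ∧ x ∉ X c := by
    intro x y hA hn
    by_contra h'
    push_neg at h'
    exact hn fun c => ⟨hA c, h' c⟩
  have hci' : i ∈ M.closure {k, j} := by rwa [Set.pair_comm k j]
  have hcj' : j ∈ M.closure {k, i} := by rwa [Set.pair_comm k i]
  have hck' : k ∈ M.closure {j, i} := by rwa [Set.pair_comm j i]
  have cl_i_jk : ∀ c, j ∈ X c → k ∈ X c → i ∈ X c := fun c hj hk => hlc c j hj k hk hci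
  have cl_i_kj : ∀ c, k ∈ X c → j ∈ X c → i ∈ X c := fun c hk hj => hlc c k hk j hj hci'
  have cl_j_ik : ∀ c, i ∈ X c → k ∈ X c → j ∈ X c := fun c hi hk => hlc c i hi k hk hcj
  have cl_j_ki : ∀ c, k ∈ X c → i ∈ X c → j ∈ X c := fun c hk hi => hlc c k hk i hi hcj'
  have cl_k_ij : ∀ c, i ∈ X c → j ∈ X c → k ∈ X c := fun c hi hj => hlc c i hi j hj hck
  have cl_k_ji : ∀ c, j ∈ X c → i ∈ X c → k ∈ X c := fun c hj hi => hlc c j hj i hi hck'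
  by_contra hno
  rw [not_or, not_or] at hno
  obtain ⟨h1, h2, h3⟩ := hno
  rcases tot i j with hij | hij <;> rcases tot j k with hjk | hjk <;>
    rcases tot i k with hik | hik
  · exact final i j k (wit i j hij h1) hjk cl_i_jk
  · exact h1 fun c => ⟨fun hx => hij c hx, fun hj => hik c (hjk c hj)⟩
  · exact final i k j (wit i k hik h3) hjk cl_i_kj
  · exact final k i j (wit k i hik fun hiff => h3 fun c => (hiff c).symm) hij cl_k_ij
  · exact final j i k (wit j i hij fun hiff => h1 fun c => (hiff c).symm) hik cl_j_ik
  · exact final j k i (wit j k hjk h2) hik cl_j_ki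
  · exact h3 fun c => ⟨fun hx => hik c hx, fun hk => hij c (hjk c hk)⟩
  · exact final k j i (wit k j hjk fun hiff => h2 fun c => (hiff c).symm) hij cl_k_ji


lemma phiF_core {M : Matroid (Fin n)} (hmono : Monotone X)
    (hlc : ∀ c, LineClosedSet M (X c))
    (D : ExteriorAlgebra K (Fin n → K) →ₗ[K] ExteriorAlgebra K (Fin n → K))
    (hD : IsBoundary K D) {i j k : Fin n}
    (hci : i ∈ M.closure {j, k}) (hcj : j ∈ M.closure {i, k}) (hck : k ∈ M.closure {i, j})
    (lu lv : List (Fin n → K)) :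
    phiF K p X ((lu.map (ι K)).prod * D (eS K [i, j, k]) * (lv.map (ι K)).prod) = 0 := by
  have hDval : D (eS K [i, j, k]) = eS K [j, k] - eS K [i, k] + eS K [i, j] := by
    rw [hD [i, j, k]]
    show ∑ t : Fin 3, ((-1 : K) ^ (t : ℕ)) • eS K ([i, j, k].eraseIdx t) = _
    rw [Fin.sum_univ_three]
    norm_num [List.eraseIdx]
    abel
  have expand : (lu.map (ι K)).prod * D (eS K [i, j, k]) * (lv.map (ι K)).prod =
      ((lu ++ (Pi.single j 1 : Fin n → K) :: Pi.single k 1 :: lv).map (ι K)).prod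
      - ((lu ++ (Pi.single i 1 : Fin n → K) :: Pi.single k 1 :: lv).map (ι K)).prod
      + ((lu ++ (Pi.single i 1 : Fin n → K) :: Pi.single j 1 :: lv).map (ι K)).prod := by
    have h2 : ∀ x y : Fin n,
        ((lu ++ (Pi.single x 1 : Fin n → K) :: Pi.single y 1 :: lv).map (ι K)).prod
          = (lu.map (ι K)).prod * eS K [x, y] * (lv.map (ι K)).prod := by
      intro x y
      simp [eS, gen, List.map_append, List.prod_append, mul_assoc]
    rw [hDval, h2, h2, h2]
    noncomm_ring
  rw [expand, map_add, map_sub]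
  by_cases hq : lu.length + 2 + lv.length = p
  case neg =>
    have hne : ∀ x y : Fin n → K, (lu ++ x :: y :: lv).length ≠ p := by
      intro x y; simp; omega
    rw [phiF_list_ne K p X (hne _ _), phiF_list_ne K p X (hne _ _),
      phiF_list_ne K p X (hne _ _)]
    ring
  case pos =>
    have hlen : ∀ x y : Fin n → K, (lu ++ x :: y :: lv).length = p := by
      intro x y; simp; omega
    rw [phiF_list_eq K p X (hlen _ _), phiF_list_eq K p X (hlen _ _),
      phiF_list_eq K p X (hlen _ _)]
    rw [phiAlt_apply, phiAlt_apply, phiAlt_apply]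
    have hqa : lu.length < p := by omega
    have hqb : lu.length + 1 < p := by omega
    set qa : Fin p := ⟨lu.length, hqa⟩ with hqadef
    set qb : Fin p := ⟨lu.length + 1, hqb⟩ with hqbdef
    have hqab : qa ≠ qb := by
      intro h
      have := congrArg Fin.val h
      simp [hqadef, hqbdef] at this
    set Wb : Fin p → (Fin p → K) := fun a =>
      rowTheta K p X ((lu ++ (0 : Fin n → K) :: (0 : Fin n → K) :: lv).get
        (Fin.cast (hlen 0 0).symm a)) with hWb
    set W : (Fin n → K) → (Fin n → K) → Fin p → (Fin p → K) := fun x y a =>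
      if a = qa then rowTheta K p X x else if a = qb then rowTheta K p X y else Wb a with hW
    have hWeq : ∀ x y : Fin n → K,
        (fun a => rowTheta K p X ((lu ++ x :: y :: lv).get (Fin.cast (hlen x y).symm a)))
          = W x y := by
      intro x y
      funext a
      simp only [List.get_eq_getElem, Fin.coe_cast]
      by_cases h1 : (a : ℕ) < lu.length
      · have ha : a ≠ qa := by
          intro h
          have : (a : ℕ) = lu.length := by rw [h]
          omega
        have hb : a ≠ qb := by
          intro h
          have : (a : ℕ) = lu.length + 1 := by rw [h]
          omega
        rw [List.getElem_append_left h1]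
        simp only [hW, if_neg ha, if_neg hb, hWb, List.get_eq_getElem, Fin.coe_cast]
        rw [List.getElem_append_left h1]
      · push_neg at h1
        by_cases h2 : (a : ℕ) = lu.length
        · have ha : a = qa := by apply Fin.ext; simpa [hqadef] using h2
          rw [List.getElem_append_right h1]
          simp only [h2, Nat.sub_self, List.getElem_cons_zero]
          simp only [hW, if_pos ha]
        · by_cases h3 : (a : ℕ) = lu.length + 1
          · have hb : a = qb := by apply Fin.ext; simpa [hqbdef] using h3
            have ha : a ≠ qa := by
              intro h
              have : (a : ℕ) = lu.length := by rw [h]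
              omega
            rw [List.getElem_append_right h1]
            have hs : (a : ℕ) - lu.length = 1 := by omega
            simp only [hs]
            show rowTheta K p X y = W x y a
            simp only [hW, if_neg ha, if_pos hb]
          · have ha : a ≠ qa := by
              intro h
              have : (a : ℕ) = lu.length := by rw [h]
              omega
            have hb : a ≠ qb := by
              intro h
              have : (a : ℕ) = lu.length + 1 := by rw [h]
              omega
            have e2 : ∀ z w : Fin n → K, ∀ hz : (a : ℕ) < (lu ++ z :: w :: lv).length,
                (lu ++ z :: w :: lv)[(a : ℕ)]'hz
                  = lv[(a : ℕ) - lu.length - 2]'(by have := a.isLt; omega) := by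
              intro z w hz
              rw [List.getElem_append_right h1]
              obtain ⟨m, hm⟩ : ∃ m, (a : ℕ) - lu.length = m + 2 :=
                ⟨(a:ℕ) - lu.length - 2, by omega⟩
              have hm2 : (a : ℕ) - lu.length - 2 = m := by omega
              simp only [hm, hm2]
              rfl
            rw [e2]
            simp only [hW, if_neg ha, if_neg hb, hWb, List.get_eq_getElem, Fin.coe_cast]
            rw [e2]
    rw [hWeq, hWeq, hWeq]
    have hWqa : ∀ x y : Fin n → K, W x y qa = rowTheta K p X x := by
      intro x y
      simp only [hW]
      simp
    have hWqb : ∀ x y : Fin n → K, W x y qb = rowTheta K p X y := by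
      intro x y
      simp only [hW]
      simp [Ne.symm hqab]
    rcases rows_collapse p X hmono hlc hci hcj hck with hc | hc | hc
    · have hrow : rowTheta K p X (Pi.single i 1) = rowTheta K p X (Pi.single j 1) := by
        rw [rowTheta_single, rowTheta_single]
        funext c
        by_cases h : i ∈ X c
        · rw [if_pos h, if_pos ((hc c).mp h)]
        · rw [if_neg h, if_neg (fun hj => h ((hc c).mpr hj))]
      have e12 : W (Pi.single i 1) (Pi.single k 1) = W (Pi.single j 1) (Pi.single k 1) := by
        funext a; simp only [hW]; rw [hrow]
      have ez : Matrix.detRowAlternating (W (Pi.single i 1) (Pi.single j 1)) = 0 :=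
        Matrix.detRowAlternating.map_eq_zero_of_eq _ (by rw [hWqa, hWqb, hrow]) hqab
      rw [e12, ez]
      ring
    · have hrow : rowTheta K p X (Pi.single j 1) = rowTheta K p X (Pi.single k 1) := by
        rw [rowTheta_single, rowTheta_single]
        funext c
        by_cases h : j ∈ X c
        · rw [if_pos h, if_pos ((hc c).mp h)]
        · rw [if_neg h, if_neg (fun hj => h ((hc c).mpr hj))]
      have ez : Matrix.detRowAlternating (W (Pi.single j 1) (Pi.single k 1)) = 0 :=
        Matrix.detRowAlternating.map_eq_zero_of_eq _ (by rw [hWqa, hWqb, hrow]) hqab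
      have e13 : W (Pi.single i 1) (Pi.single k 1) = W (Pi.single i 1) (Pi.single j 1) := by
        funext a; simp only [hW]; rw [hrow]
      rw [ez, e13]
      ring
    · have hrow : rowTheta K p X (Pi.single i 1) = rowTheta K p X (Pi.single k 1) := by
        rw [rowTheta_single, rowTheta_single]
        funext c
        by_cases h : i ∈ X c
        · rw [if_pos h, if_pos ((hc c).mp h)]
        · rw [if_neg h, if_neg (fun hj => h ((hc c).mpr hj))]
      have ez : Matrix.detRowAlternating (W (Pi.single i 1) (Pi.single k 1)) = 0 :=
        Matrix.detRowAlternating.map_eq_zero_of_eq _ (by rw [hWqa, hWqb, hrow]) hqab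
      have e31 : W (Pi.single i 1) (Pi.single j 1) = W (Pi.single k 1) (Pi.single j 1) := by
        funext a; simp only [hW]; rw [hrow]
      have eswap : W (Pi.single k 1) (Pi.single j 1)
          = W (Pi.single j 1) (Pi.single k 1) ∘ Equiv.swap qa qb := by
        funext a
        by_cases h : a = qa
        · simp only [Function.comp_apply]
          rw [h, Equiv.swap_apply_left, hWqa, hWqb]
        · by_cases h' : a = qb
          · simp only [Function.comp_apply]
            rw [h', Equiv.swap_apply_right, hWqb, hWqa]
          · simp only [Function.comp_apply]
            rw [Equiv.swap_apply_of_ne_of_ne h h']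
            simp only [hW, if_neg h, if_neg h']
      have emin : Matrix.detRowAlternating (W (Pi.single k 1) (Pi.single j 1))
          = - Matrix.detRowAlternating (W (Pi.single j 1) (Pi.single k 1)) := by
        rw [eswap]
        exact Matrix.detRowAlternating.map_swap (W (Pi.single j 1) (Pi.single k 1)) hqab
      rw [ez, e31, emin]
      ring

end Phi


-- ==== part 5 : ideal containment ====
section Ideal
open scoped Classical

variable (D : ExteriorAlgebra K (Fin n → K) →ₗ[K] ExteriorAlgebra K (Fin n → K))

/-- The submodule generated by `u * ∂e_C * v` for dependent triples `C`. -/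
noncomputable def Jsub (M : Matroid (Fin n)) : Submodule K (ExteriorAlgebra K (Fin n → K)) :=
  Submodule.span K {x | ∃ u v : ExteriorAlgebra K (Fin n → K), ∃ l : List (Fin n),
    l.Nodup ∧ M.Dep {i | i ∈ l} ∧ l.length = 3 ∧ x = u * D (eS K l) * v}

lemma Jsub_mul_left {M : Matroid (Fin n)} (r : ExteriorAlgebra K (Fin n → K)) {x}
    (hx : x ∈ Jsub K D M) : r * x ∈ Jsub K D M := by
  refine Submodule.span_induction ?_ ?_ ?_ ?_ hx
  · rintro z ⟨u, v, l, h1, h2, h3, rfl⟩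
    refine Submodule.subset_span ⟨r * u, v, l, h1, h2, h3, ?_⟩
    rw [← mul_assoc, ← mul_assoc]
  · rw [mul_zero]; exact Submodule.zero_mem _
  · intro z w _ _ hz hw; rw [mul_add]; exact Submodule.add_mem _ hz hw
  · intro c z _ hz; rw [mul_smul_comm]; exact Submodule.smul_mem _ _ hz

lemma Jsub_mul_right {M : Matroid (Fin n)} (r : ExteriorAlgebra K (Fin n → K)) {x}
    (hx : x ∈ Jsub K D M) : x * r ∈ Jsub K D M := by
  refine Submodule.span_induction ?_ ?_ ?_ ?_ hx
  · rintro z ⟨u, v, l, h1, h2, h3, rfl⟩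
    refine Submodule.subset_span ⟨u, v * r, l, h1, h2, h3, ?_⟩
    rw [← mul_assoc]
  · rw [zero_mul]; exact Submodule.zero_mem _
  · intro z w _ _ hz hw; rw [add_mul]; exact Submodule.add_mem _ hz hw
  · intro c z _ hz; rw [smul_mul_assoc]; exact Submodule.smul_mem _ _ hz

lemma eS_mem_power (l : List (Fin n)) : eS K l ∈ ⋀[K]^l.length (Fin n → K) := by
  induction l with
  | nil =>
    have h1 : eS K ([] : List (Fin n)) = 1 := by simp [eS]
    rw [h1]
    show (1 : ExteriorAlgebra K (Fin n → K)) ∈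
      (LinearMap.range (ι K : (Fin n → K) →ₗ[K] ExteriorAlgebra K (Fin n → K)))^0
    rw [pow_zero]
    exact Submodule.one_le.mp le_rfl
  | cons a t ih =>
    have h1 : eS K (a :: t) = gen K a * eS K t := by simp [eS]
    rw [h1]
    show gen K a * eS K t ∈
      (LinearMap.range (ι K : (Fin n → K) →ₗ[K] ExteriorAlgebra K (Fin n → K)))^(t.length + 1)
    rw [pow_succ']
    exact Submodule.mul_mem_mul ⟨Pi.single a 1, rfl⟩ ih

lemma Dval_mem_power (hD : IsBoundary K D) (l : List (Fin n)) :
    D (eS K l) ∈ ⋀[K]^(l.length - 1) (Fin n → K) := by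
  rw [hD l]
  refine Submodule.sum_mem _ fun kk _ => Submodule.smul_mem _ _ ?_
  have h := eS_mem_power K (l.eraseIdx (kk : ℕ))
  rwa [List.length_eraseIdx, if_pos kk.isLt] at h

lemma decompose_mem_Jsub {M : Matroid (Fin n)} (hsimple : MatroidSimple M)
    (hD : IsBoundary K D) {x} (hx : x ∈ OSIdeal K M D) :
    ∀ jj : ℕ, jj ≤ 2 →
      (DirectSum.decompose (fun i : ℕ => ⋀[K]^i (Fin n → K)) x jj :
        ExteriorAlgebra K (Fin n → K)) ∈ Jsub K D M := by
  rw [OSIdeal, TwoSidedIdeal.mem_span_iff] at hx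
  have hT := hx (TwoSidedIdeal.mk'
    {y | ∀ jj : ℕ, jj ≤ 2 →
      (DirectSum.decompose (fun i : ℕ => ⋀[K]^i (Fin n → K)) y jj :
        ExteriorAlgebra K (Fin n → K)) ∈ Jsub K D M}
    (fun jj _ => by simp)
    (fun {y z} hy hz jj h2 => by
      rw [DirectSum.decompose_add, DirectSum.add_apply, Submodule.coe_add]
      exact Submodule.add_mem _ (hy jj h2) (hz jj h2))
    (fun {y} hy jj h2 => by
      rw [DirectSum.decompose_neg, DFinsupp.neg_apply]
      exact neg_mem (hy jj h2))
    (fun {y z} hz jj h2 => by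
      rw [DirectSum.decompose_mul, DirectSum.coe_mul_apply]
      refine Submodule.sum_mem _ ?_
      rintro ⟨a, b⟩ hab
      simp only [Finset.mem_filter] at hab
      have hb : b ≤ 2 := by omega
      exact Jsub_mul_left K D _ (hz b hb))
    (fun {y z} hy jj h2 => by
      rw [DirectSum.decompose_mul, DirectSum.coe_mul_apply]
      refine Submodule.sum_mem _ ?_
      rintro ⟨a, b⟩ hab
      simp only [Finset.mem_filter] at hab
      have ha : a ≤ 2 := by omega
      exact Jsub_mul_right K D _ (hy a ha)))
    ?_
  · rwa [TwoSidedIdeal.mem_mk'] at hT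
  · rintro g ⟨l, hnd, hdep, rfl⟩
    rw [SetLike.mem_coe, TwoSidedIdeal.mem_mk']
    intro jj hjj
    have h3 : 3 ≤ l.length := three_le_length_of_dep hsimple hnd hdep
    have hmem := Dval_mem_power K D hD l
    by_cases he : jj = l.length - 1
    · have hlen3 : l.length = 3 := by omega
      rw [he, DirectSum.decompose_of_mem_same (fun i : ℕ => ⋀[K]^i (Fin n → K)) hmem]
      exact Submodule.subset_span ⟨1, 1, l, hnd, hdep, hlen3, by rw [one_mul, mul_one]⟩
    · rw [DirectSum.decompose_of_mem_ne (fun i : ℕ => ⋀[K]^i (Fin n → K)) hmem (Ne.symm he)]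
      exact Submodule.zero_mem _

lemma kAdic_le_Jsub {M : Matroid (Fin n)} (hsimple : MatroidSimple M)
    (hD : IsBoundary K D) : ∀ x ∈ kAdicIdeal K M D 2, x ∈ Jsub K D M := by
  intro x hx
  rw [kAdicIdeal, TwoSidedIdeal.mem_span_iff] at hx
  have hI := hx (TwoSidedIdeal.mk' (Jsub K D M : Set (ExteriorAlgebra K (Fin n → K)))
    (Submodule.zero_mem _)
    (fun hy hz => Submodule.add_mem _ hy hz)
    (fun hy => neg_mem hy)
    (fun {r y} hy => Jsub_mul_left K D r hy)
    (fun {y r} hy => Jsub_mul_right K D r hy))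
    ?_
  · rwa [TwoSidedIdeal.mem_mk'] at hI
  · rintro y ⟨hyI, jj, hjj, hyj⟩
    rw [SetLike.mem_coe, TwoSidedIdeal.mem_mk']
    have h := decompose_mem_Jsub K D hsimple hD hyI jj hjj
    rwa [DirectSum.decompose_of_mem_same (fun i : ℕ => ⋀[K]^i (Fin n → K)) hyj] at h

end Ideal

-- ==== part 6 : phiF vanishes on Jsub ====
lemma phiF_vanish_Jsub (p : ℕ) (X : Fin p → Set (Fin n)) {M : Matroid (Fin n)}
    (hmono : Monotone X) (hlc : ∀ c, LineClosedSet M (X c))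
    (hsimple : MatroidSimple M)
    (D : ExteriorAlgebra K (Fin n → K) →ₗ[K] ExteriorAlgebra K (Fin n → K))
    (hD : IsBoundary K D) : ∀ x ∈ Jsub K D M, phiF K p X x = 0 := by
  have hgen : ∀ y ∈ {x | ∃ u v : ExteriorAlgebra K (Fin n → K), ∃ l : List (Fin n),
      l.Nodup ∧ M.Dep {i | i ∈ l} ∧ l.length = 3 ∧ x = u * D (eS K l) * v},
      phiF K p X y = 0 := by
    rintro y ⟨u, v, l, hnd, hdep, hlen3, rfl⟩
    rcases l with _ | ⟨c0, _ | ⟨c1, _ | ⟨c2, _ | t⟩⟩⟩ <;>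
      simp only [List.length_nil, List.length_cons] at hlen3 <;> try omega
    have hset : {i | i ∈ [c0, c1, c2]} = ({c0, c1, c2} : Set (Fin n)) := by
      ext x; simp
    have hc0 : c0 ∈ M.closure {c1, c2} := by
      refine mem_closure_of_dep hsimple ?_
      have h1 : insert c0 {c1, c2} = ({c0, c1, c2} : Set (Fin n)) := rfl
      rw [h1, ← hset]; exact hdep
    have hc1 : c1 ∈ M.closure {c0, c2} := by
      refine mem_closure_of_dep hsimple ?_
      have h1 : insert c1 {c0, c2} = ({c0, c1, c2} : Set (Fin n)) := by
        ext x; simp; tauto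
      rw [h1, ← hset]; exact hdep
    have hc2 : c2 ∈ M.closure {c0, c1} := by
      refine mem_closure_of_dep hsimple ?_
      have h1 : insert c2 {c0, c1} = ({c0, c1, c2} : Set (Fin n)) := by
        ext x; simp; tauto
      rw [h1, ← hset]; exact hdep
    have hmono' : ∀ lu lv : List (Fin n → K),
        phiF K p X ((lu.map (ι K)).prod * D (eS K [c0, c1, c2]) * (lv.map (ι K)).prod) = 0 :=
      fun lu lv => phiF_core K p X hmono hlc D hD hc0 hc1 hc2 lu lv
    have step1 : ∀ lu : List (Fin n → K), ∀ w : ExteriorAlgebra K (Fin n → K),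
        phiF K p X ((lu.map (ι K)).prod * D (eS K [c0, c1, c2]) * w) = 0 := by
      intro lu w
      refine Submodule.span_induction ?_ ?_ ?_ ?_ (mem_monomialSpan w)
      · rintro z ⟨lv, rfl⟩; exact hmono' lu lv
      · rw [mul_zero, map_zero]
      · intro z w' _ _ hz hw'; rw [mul_add, map_add, hz, hw', add_zero]
      · intro c z _ hz; rw [mul_smul_comm, map_smul, hz, smul_zero]
    refine Submodule.span_induction ?_ ?_ ?_ ?_ (mem_monomialSpan u)
    · rintro z ⟨lu, rfl⟩; exact step1 lu v
    · rw [zero_mul, zero_mul, map_zero]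
    · intro z w' _ _ hz hw'; rw [add_mul, add_mul, map_add, hz, hw', add_zero]
    · intro c z _ hz; rw [smul_mul_assoc, smul_mul_assoc, map_smul, hz, smul_zero]
  intro x hx
  refine Submodule.span_induction hgen ?_ ?_ ?_ hx
  · exact map_zero _
  · intro a b _ _ ha hb; rw [map_add, ha, hb, add_zero]
  · intro c z _ hz; rw [map_smul, hz, smul_zero]

-- ==== part 7 : values on basis monomials ====
section Part7
open scoped Classical
lemma eS_as_monomial (l : List (Fin n)) :
    eS K l = ((l.map (fun x => (Pi.single x 1 : Fin n → K))).map (ι K)).prod := by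
  rw [List.map_map]
  rfl

lemma phiF_eS_ne (p : ℕ) (X : Fin p → Set (Fin n)) {l : List (Fin n)} (h : l.length ≠ p) :
    phiF K p X (eS K l) = 0 := by
  rw [eS_as_monomial, phiF_list_ne]
  simpa using h

lemma phiF_eS_eq (p : ℕ) (X : Fin p → Set (Fin n)) {l : List (Fin n)} (h : l.length = p) :
    phiF K p X (eS K l) = Matrix.detRowAlternating
      (fun a c => if l.get (Fin.cast h.symm a) ∈ X c then (1 : K) else 0) := by
  rw [eS_as_monomial, phiF_list_eq K p X (by simpa using h), phiAlt_apply]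
  congr 1
  funext a
  simp only [List.get_eq_getElem, Fin.coe_cast, List.getElem_map]
  rw [rowTheta_single]

lemma wsum_eq (l : List (Fin n)) :
    (l.map (fun x : Fin n => (x : ℕ))).sum = ∑ b : Fin l.length, ((l.get b : Fin n) : ℕ) := by
  conv_lhs => rw [← List.ofFn_get l]
  rw [List.map_ofFn, List.sum_ofFn]
  rfl

end Part7

/-- the monomials `a_S` for `S ∈ nbb(G)` are linearly independent in the
quadratic closure `A_2 = E/I_2`. -/
theorem nbb_linearIndependent (M : Matroid (Fin n)) (hE : M.E = Set.univ)
    (hsimple : MatroidSimple M)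
    (D : ExteriorAlgebra K (Fin n → K) →ₗ[K] ExteriorAlgebra K (Fin n → K))
    (hD : IsBoundary K D) :
    LinearIndependent K
      (fun S : {l : List (Fin n) // IsNbb M l} =>
        (Submodule.Quotient.mk (eS K S.1) :
          ExteriorAlgebra K (Fin n → K) ⧸
            Submodule.span K {x | x ∈ kAdicIdeal K M D 2})) := by
  classical
  set N : Submodule K (ExteriorAlgebra K (Fin n → K)) :=
    Submodule.span K {x | x ∈ kAdicIdeal K M D 2} with hN
  rw [linearIndependent_iff]
  intro c hc
  by_contra hc0
  have hsupp : c.support.Nonempty := Finsupp.support_nonempty_iff.mpr hc0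
  obtain ⟨S, hSmem, hSmax⟩ := Finset.exists_max_image c.support
    (fun S' => (S'.1.map (fun x : Fin n => (x : ℕ))).sum) hsupp
  set p := S.1.length with hp
  set X : Fin p → Set (Fin n) := fun cc =>
    lineClosure M {i | i ∈ S.1.drop (p - 1 - (cc : ℕ))} with hX
  have hmono : Monotone X := by
    intro c1 c2 hle
    refine lineClosure_mono ?_
    intro x hx
    have h1 : p - 1 - (c2 : ℕ) ≤ p - 1 - (c1 : ℕ) := by
      have := Fin.le_def.mp hle
      omega
    have h2 : S.1.drop (p - 1 - (c1 : ℕ))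
        = (S.1.drop (p - 1 - (c2 : ℕ))).drop ((p - 1 - (c1 : ℕ)) - (p - 1 - (c2 : ℕ))) := by
      rw [List.drop_drop]
      congr 1
      omega
    have hx' : x ∈ S.1.drop (p - 1 - (c1 : ℕ)) := hx
    rw [h2] at hx'
    exact List.drop_subset _ _ hx'
  have hlc : ∀ cc, LineClosedSet M (X cc) := fun cc => lineClosedSet_lineClosure _
  have hleast : ∀ cc : Fin p,
      IsLeast (X cc) (S.1.get ⟨p - 1 - (cc : ℕ), by have := cc.isLt; omega⟩) := by
    intro cc
    exact S.2.2 ⟨p - 1 - (cc : ℕ), by have := cc.isLt; omega⟩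
  have hker : ∀ x ∈ N, phiF K p X x = 0 := by
    intro x hx
    refine Submodule.span_induction ?_ ?_ ?_ ?_ hx
    · intro y hy
      exact phiF_vanish_Jsub K p X hmono hlc hsimple D hD y (kAdic_le_Jsub K D hsimple hD y hy)
    · exact map_zero _
    · intro a b _ _ ha hb; rw [map_add, ha, hb, add_zero]
    · intro a z _ hz; rw [map_smul, hz, smul_zero]
  have h0 : N.mkQ (c.sum fun S' a => a • eS K S'.1) = 0 := by
    rw [map_finsuppSum]
    rw [Finsupp.linearCombination_apply] at hc
    simpa only [map_smul, Submodule.mkQ_apply] using hc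
  have hmemN : (c.sum fun S' a => a • eS K S'.1) ∈ N := by
    rw [← Submodule.Quotient.mk_eq_zero N, ← Submodule.mkQ_apply]
    exact h0
  have hsum0 : (c.sum fun S' a => a * phiF K p X (eS K S'.1)) = 0 := by
    have h1 := hker _ hmemN
    rw [map_finsuppSum] at h1
    simpa only [map_smul, smul_eq_mul] using h1
  have hdom0 : ∀ S' : {l : List (Fin n) // IsNbb M l}, S' ∈ c.support → S' ≠ S →
      phiF K p X (eS K S'.1) = 0 := by
    intro S' hS'mem hne
    by_cases hlen : S'.1.length = p
    · rw [phiF_eS_eq K p X hlen]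
      by_contra hdet
      obtain ⟨σ, hσ⟩ : ∃ σ : Equiv.Perm (Fin p), ∀ cc,
          (if S'.1.get (Fin.cast hlen.symm (σ cc)) ∈ X cc then (1 : K) else 0) ≠ 0 := by
        by_contra hno
        push_neg at hno
        apply hdet
        show Matrix.det (Matrix.of fun a cc =>
          if S'.1.get (Fin.cast hlen.symm a) ∈ X cc then (1 : K) else 0) = 0
        rw [Matrix.det_apply]
        refine Finset.sum_eq_zero fun σ _ => ?_
        obtain ⟨cc, hcc⟩ := hno σ
        rw [Finset.prod_eq_zero (Finset.mem_univ cc) hcc, smul_zero]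
      have hmemX : ∀ cc : Fin p, S'.1.get (Fin.cast hlen.symm (σ cc)) ∈ X cc := by
        intro cc
        by_contra hmm
        exact hσ cc (by rw [if_neg hmm])
      have hdom : ∀ a : Fin p,
          S.1.get (Fin.cast hp a) ≤ S'.1.get (Fin.cast hlen.symm a) := by
        intro a
        have ha1 : (a : ℕ) ≤ p - 1 := by have := a.isLt; omega
        obtain ⟨cc, hccD, hccle⟩ : ∃ cc : Fin p, (cc : ℕ) ≤ p - 1 - (a : ℕ) ∧ σ cc ≤ a := by
          by_contra hK
          push_neg at hK
          have hp0 : 0 < p := a.pos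
          set mfin : Fin p := ⟨p - 1 - (a : ℕ), by omega⟩ with hmfin
          have hmaps : ∀ cc ∈ Finset.Iic mfin, σ cc ∈ Finset.Ioi a := by
            intro cc hcc
            rw [Finset.mem_Iic] at hcc
            rw [Finset.mem_Ioi]
            exact hK cc (by simpa [hmfin, Fin.le_def] using hcc)
          have hcard := Finset.card_le_card_of_injOn σ hmaps σ.injective.injOn
          rw [Fin.card_Iic, Fin.card_Ioi] at hcard
          simp only [hmfin] at hcard
          omega
        have h1 : S.1.get ⟨p - 1 - (cc : ℕ), by have := cc.isLt; omega⟩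
            ≤ S'.1.get (Fin.cast hlen.symm (σ cc)) := (hleast cc).2 (hmemX cc)
        have h2 : S.1.get (Fin.cast hp a)
            ≤ S.1.get ⟨p - 1 - (cc : ℕ), by have := cc.isLt; omega⟩ := by
          refine (S.2.1.sortedLT.strictMono_get.monotone) ?_
          rw [Fin.le_def]
          simp only [Fin.coe_cast]
          omega
        have h3 : S'.1.get (Fin.cast hlen.symm (σ cc))
            ≤ S'.1.get (Fin.cast hlen.symm a) := by
          refine (S'.2.1.sortedLT.strictMono_get.monotone) ?_
          rw [Fin.le_def]
          simp only [Fin.coe_cast]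
          exact Fin.le_def.mp hccle
        exact le_trans (le_trans h2 h1) h3
      have hnelist : S'.1 ≠ S.1 := fun h => hne (Subtype.ext h)
      have hexlt : ∃ a : Fin p,
          S.1.get (Fin.cast hp a) < S'.1.get (Fin.cast hlen.symm a) := by
        by_contra hallf
        push_neg at hallf
        refine hnelist (List.ext_get (by omega) fun m h1 h2 => ?_)
        have hm : m < p := by omega
        have := le_antisymm (hallf ⟨m, hm⟩) (hdom ⟨m, hm⟩)
        exact (by simpa using this)
      have hsumlt : (S.1.map (fun x : Fin n => (x : ℕ))).sum
          < (S'.1.map (fun x : Fin n => (x : ℕ))).sum := by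
        rw [wsum_eq, wsum_eq]
        rw [← Equiv.sum_comp (finCongr hp : Fin p ≃ Fin S.1.length)
          (fun b => ((S.1.get b : Fin n) : ℕ))]
        rw [← Equiv.sum_comp (finCongr hlen.symm : Fin p ≃ Fin S'.1.length)
          (fun b => ((S'.1.get b : Fin n) : ℕ))]
        obtain ⟨a0, ha0⟩ := hexlt
        refine Finset.sum_lt_sum (fun a _ => ?_) ⟨a0, Finset.mem_univ a0, ?_⟩
        · have h4 := hdom a
          rw [Fin.le_def] at h4
          simpa only [finCongr_apply] using h4
        · have h4 := ha0
          rw [Fin.lt_def] at h4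
          simpa only [finCongr_apply] using h4
      exact absurd (hSmax S' hS'mem) (not_le.mpr hsumlt)
    · exact phiF_eS_ne K p X hlen
  have hS0 : c S * phiF K p X (eS K S.1) = 0 := by
    rw [Finsupp.sum] at hsum0
    rwa [Finset.sum_eq_single S (fun b hb hbne => by rw [hdom0 b hb hbne, mul_zero])
      (fun h => absurd hSmem h)] at hsum0
  have hdetS : phiF K p X (eS K S.1) ≠ 0 := by
    rw [phiF_eS_eq K p X hp.symm]
    have hA : ∀ (a cc : Fin p),
        (if S.1.get (Fin.cast (hp.symm).symm a) ∈ X cc then (1 : K) else 0)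
          = if p - 1 - (cc : ℕ) ≤ (a : ℕ) then 1 else 0 := by
      intro a cc
      by_cases hcase : p - 1 - (cc : ℕ) ≤ (a : ℕ)
      · rw [if_pos hcase, if_pos]
        refine subset_lineClosure _ ?_
        show S.1.get (Fin.cast (hp.symm).symm a) ∈ S.1.drop (p - 1 - (cc : ℕ))
        have hlt : (p - 1 - (cc : ℕ)) + ((a : ℕ) - (p - 1 - (cc : ℕ))) < S.1.length := by
          have := a.isLt; omega
        have : S.1.get (Fin.cast (hp.symm).symm a)
            = (S.1.drop (p - 1 - (cc : ℕ)))[(a : ℕ) - (p - 1 - (cc : ℕ))]'(by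
              rw [List.length_drop]; have := a.isLt; omega) := by
          rw [List.getElem_drop, List.get_eq_getElem]
          congr 1
          simp only [Fin.coe_cast]
          omega
        rw [this]
        exact List.getElem_mem _
      · rw [if_neg hcase, if_neg]
        intro hmm
        have hle := (hleast cc).2 hmm
        have hlt : S.1.get (Fin.cast (hp.symm).symm a)
            < S.1.get ⟨p - 1 - (cc : ℕ), by have := cc.isLt; omega⟩ := by
          refine S.2.1.sortedLT.strictMono_get ?_
          rw [Fin.lt_def]
          simp only [Fin.coe_cast]
          omega
        exact absurd hle (not_le.mpr hlt)
    have hdet : Matrix.detRowAlternating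
        (fun a cc => if S.1.get (Fin.cast (hp.symm).symm a) ∈ X cc then (1 : K) else 0)
        = Matrix.det (Matrix.of fun a cc : Fin p =>
            if p - 1 - (cc : ℕ) ≤ (a : ℕ) then (1 : K) else 0) := by
      show Matrix.det _ = _
      congr 1
      funext a cc
      exact hA a cc
    rw [hdet]
    set A : Matrix (Fin p) (Fin p) K :=
      Matrix.of fun a cc : Fin p => if p - 1 - (cc : ℕ) ≤ (a : ℕ) then (1 : K) else 0 with hAdef
    have hBdet : (A.submatrix id ⇑(Fin.revPerm : Equiv.Perm (Fin p))).det = 1 := by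
      rw [Matrix.det_of_lowerTriangular]
      · refine Finset.prod_eq_one fun a _ => ?_
        show A a (Fin.rev a) = 1
        rw [hAdef]
        simp only [Matrix.of_apply]
        rw [if_pos]
        rw [Fin.val_rev]
        have := a.isLt
        omega
      · intro a b hab
        have hab' : (a : ℕ) < (b : ℕ) := hab
        show A a (Fin.rev b) = 0
        rw [hAdef]
        simp only [Matrix.of_apply]
        rw [if_neg]
        rw [Fin.val_rev]
        have := b.isLt
        omega
    have hperm := Matrix.det_permute' (Fin.revPerm : Equiv.Perm (Fin p)) A
    intro hzero
    rw [hzero, mul_zero] at hperm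
    rw [hBdet] at hperm
    exact one_ne_zero hperm
  have : c S = 0 := by
    rcases mul_eq_zero.mp hS0 with h | h
    · exact h
    · exact absurd h hdetS
  exact absurd this (Finsupp.mem_support_iff.mp hSmem)
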